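/- Let A : ℝⁿ → Set ℝⁿ be partly smooth at x̄ relative to a manifold M given by a C^p patch through x̄, and let ū ∈ ri(A(x̄)). Let (x_k) be a sequence in M with x_k → x̄ and let u_k ∈ A(x_k) with u_k → ū. Then u_k ∈ ri(A(x_k)) for all sufficiently large k. -/

import Mathlib

open Filter Topology Set RealInnerProductSpace

noncomputable section

/-- A set-valued operator `A` is upper semicontinuous: whenever `x k → x₀`,
`u k ∈ A (x k)` for all `k`, and `u k → u₀`, then `u₀ ∈ A x₀`. -/
def UpperSC {E : Type*} [NormedAddCommGroup E] [InnerProductSpace ℝ E]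
    (A : E → Set E) : Prop :=
  ∀ (x u : ℕ → E) (x₀ u₀ : E),
    Tendsto x atTop (𝓝 x₀) → (∀ k, u k ∈ A (x k)) → Tendsto u atTop (𝓝 u₀) →
      u₀ ∈ A x₀

/-- `A` is lower semicontinuous along `S` at `x₀ ∈ S`. -/
def LowerSCAlongAt {E : Type*} [NormedAddCommGroup E] [InnerProductSpace ℝ E]
    (A : E → Set E) (S : Set E) (x₀ : E) : Prop :=
  ∀ u₀ ∈ A x₀, ∀ x : ℕ → E, (∀ k, x k ∈ S) → Tendsto x atTop (𝓝 x₀) →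
    ∃ u : ℕ → E, (∀ k, u k ∈ A (x k)) ∧ Tendsto u atTop (𝓝 u₀)

/-- `A` is continuous along `S` near `xbar`: lower semicontinuous along `S` at every
point of `S` in some neighborhood of `xbar`. -/
def ContinuousAlongNear {E : Type*} [NormedAddCommGroup E] [InnerProductSpace ℝ E]
    (A : E → Set E) (S : Set E) (xbar : E) : Prop :=
  ∃ W ∈ 𝓝 xbar, ∀ x ∈ S ∩ W, LowerSCAlongAt A S x

/-- A `C^p` patch (local parametrization) of a manifold `M ⊆ E` through `xbar`,
with parameter domain `F` (playing the role of `ℝ^d`). -/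
structure CpPatch (p : ℕ∞) (F : Type*) [NormedAddCommGroup F] [InnerProductSpace ℝ F]
    {E : Type*} [NormedAddCommGroup E] [InnerProductSpace ℝ E]
    (M : Set E) (xbar : E) where
  V : Set F
  toFun : F → E
  isOpen_V : IsOpen V
  zero_mem : (0 : F) ∈ V
  contDiffOn : ContDiffOn ℝ p toFun V
  injOn : Set.InjOn toFun V
  fderiv_injective : ∀ t ∈ V, Function.Injective (fderiv ℝ toFun t)
  map_zero : toFun 0 = xbar
  image_eq : M = toFun '' V

namespace CpPatch

variable {p : ℕ∞} {F : Type*} [NormedAddCommGroup F] [InnerProductSpace ℝ F]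
  {E : Type*} [NormedAddCommGroup E] [InnerProductSpace ℝ E] {M : Set E} {xbar : E}

/-- The tangent space `T_M(x) = range (Dφ(t))` where `x = φ(t)`, `t ∈ V`. -/
def tangent (P : CpPatch p F M xbar) (x : E) : Submodule ℝ E :=
  haveI : Nonempty F := ⟨0⟩
  LinearMap.range ((fderiv ℝ P.toFun (Function.invFunOn P.toFun P.V x) : F →ₗ[ℝ] E))

/-- The normal space `N_M(x) = (T_M(x))ᗮ`. -/
def normal (P : CpPatch p F M xbar) (x : E) : Submodule ℝ E :=
  (P.tangent x)ᗮ

end CpPatch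

/-- `Lin S`: the direction of the affine span of `S`. -/
def Lin {E : Type*} [NormedAddCommGroup E] [InnerProductSpace ℝ E] (S : Set E) :
    Submodule ℝ E :=
  (affineSpan ℝ S).direction

/-- `A` is partly smooth at `xbar` relative to `M` (given by the `C^p` patch `P`). -/
def PartlySmoothAt {p : ℕ∞} {F : Type*} [NormedAddCommGroup F] [InnerProductSpace ℝ F]
    {E : Type*} [NormedAddCommGroup E] [InnerProductSpace ℝ E] [FiniteDimensional ℝ E]
    (A : E → Set E) (M : Set E) (xbar : E) (P : CpPatch p F M xbar) : Prop :=
  UpperSC A ∧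
  -- Regularity
  (∃ W ∈ 𝓝 xbar, ∀ x ∈ W, (A x).Nonempty ∧ IsClosed (A x) ∧ Convex ℝ (A x)) ∧
  -- Sharpness
  P.normal xbar = Lin (A xbar) ∧
  (∃ η : E → E, ∃ W ∈ 𝓝 xbar, ContinuousOn η (M ∩ W) ∧
    ∀ x ∈ M ∩ W,
      (fun v => ((P.tangent x).orthogonalProjectionOnto v : E)) '' A x = {η x}) ∧
  -- Continuity
  ContinuousAlongNear A M xbar

/-- The `ε`-localization of `A` around `(xbar, ubar)`. -/
def Locz {E : Type*} [NormedAddCommGroup E] [InnerProductSpace ℝ E]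
    (A : E → Set E) (xbar ubar : E) (ε : ℝ) (x : E) : Set E :=
  if ‖x - xbar‖ < ε then {u ∈ A x | ‖u - ubar‖ < ε} else ∅

/-- `A` is `r`-resolvent-regular at `xbar` for `ubar`, with constants `r > 0`, `ε > 0`. -/
def ResolventRegular {E : Type*} [NormedAddCommGroup E] [InnerProductSpace ℝ E]
    (A : E → Set E) (xbar ubar : E) (r ε : ℝ) : Prop :=
  0 < r ∧ 0 < ε ∧
  (∀ x y u v : E, u ∈ Locz A xbar ubar ε x → v ∈ Locz A xbar ubar ε y →
    (inner ℝ (x - y) (u - v) : ℝ) ≥ -r * ‖x - y‖ ^ 2) ∧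
  (∀ γ : ℝ, 0 < γ → γ < 1 / r →
    ∃ W ∈ 𝓝 (xbar + γ • ubar), ∃ J : E → E, ContinuousOn J W ∧
      ∀ z ∈ W, ∀ x : E,
        (∃ u ∈ Locz A xbar ubar ε x, z = x + γ • u) ↔ x = J z)

/-- The local union `U_{γ,ε} = ⋃_{x ∈ M, ‖x-x̄‖<ε} (x + γ A_ε(x))`. -/
def LocalUnion {E : Type*} [NormedAddCommGroup E] [InnerProductSpace ℝ E]
    (A : E → Set E) (M : Set E) (xbar ubar : E) (γ ε : ℝ) : Set E :=
  {z | ∃ x ∈ M, ‖x - xbar‖ < ε ∧ ∃ u ∈ Locz A xbar ubar ε x, z = x + γ • u}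


section ConvAux
open Metric Pointwise
variable {E : Type*} [NormedAddCommGroup E] [InnerProductSpace ℝ E]

lemma mem_intrinsicInterior_iff_ball {s : Set E} {a : E} (ha : a ∈ s) :
    a ∈ intrinsicInterior ℝ s ↔
      ∃ ε > 0, ∀ y ∈ (affineSpan ℝ s : Set E), dist y a < ε → y ∈ s := by
  constructor
  · rintro ⟨y, hy, rfl⟩
    rw [mem_interior_iff_mem_nhds, nhds_subtype, Filter.mem_comap] at hy
    obtain ⟨T, hT, hTs⟩ := hy
    obtain ⟨ε, hε, hball⟩ := Metric.mem_nhds_iff.1 hT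
    refine ⟨ε, hε, fun z hz hdist => ?_⟩
    have : ((⟨z, hz⟩ : affineSpan ℝ s) : E) ∈ T := hball (Metric.mem_ball.2 hdist)
    exact hTs this
  · rintro ⟨ε, hε, h⟩
    have haspan : a ∈ affineSpan ℝ s := subset_affineSpan ℝ s ha
    refine ⟨⟨a, haspan⟩, ?_, rfl⟩
    rw [mem_interior_iff_mem_nhds, nhds_subtype, Filter.mem_comap]
    refine ⟨Metric.ball a ε, Metric.ball_mem_nhds a hε, fun y hy => ?_⟩
    exact h y y.2 (Metric.mem_ball.1 hy)

lemma exists_unit_separating [FiniteDimensional ℝ E] {s : Set E} (hconv : Convex ℝ s)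
    {a : E} (ha : a ∈ s) (hri : a ∉ intrinsicInterior ℝ s) :
    ∃ z : E, z ∈ (affineSpan ℝ s).direction ∧ ‖z‖ = 1 ∧ ∀ w ∈ s, ⟪z, w - a⟫ ≤ 0 := by
  set D := (affineSpan ℝ s).direction with hD
  have hdiff : ∀ {w : E}, w ∈ s → w - a ∈ D := fun {w} hw => by
    rw [hD, ← vsub_eq_sub]
    exact AffineSubspace.vsub_mem_direction (subset_affineSpan ℝ s hw) (subset_affineSpan ℝ s ha)
  set t : Set D := ((↑) : D → E) ⁻¹' ((-a) +ᵥ s) with ht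
  have hmem_t : ∀ v : D, v ∈ t ↔ (v : E) + a ∈ s := by
    intro v
    rw [ht, Set.mem_preimage, Set.mem_vadd_set_iff_neg_vadd_mem]
    simp [neg_neg, add_comm]
  have tconv : Convex ℝ t := (hconv.vadd (-a)).linear_preimage D.subtype
  have h0t : (0 : D) ∈ t := by rw [hmem_t]; simpa using ha
  -- span of t is everything
  have hspan_t : Submodule.span ℝ t = ⊤ := by
    have himg : ((↑) : D → E) '' t = (-a) +ᵥ s := by
      apply Set.image_preimage_eq_of_subset
      rintro x ⟨w, hw, rfl⟩
      rw [Subtype.range_coe]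
      show -a + w ∈ D
      rw [neg_add_eq_sub]
      exact hdiff hw
    have hsub : s -ᵥ s ⊆ (Submodule.span ℝ ((-a) +ᵥ s) : Set E) := by
      rintro x ⟨w, hw, w', hw', rfl⟩
      have h1 : -a + w ∈ Submodule.span ℝ ((-a) +ᵥ s) :=
        Submodule.subset_span ⟨w, hw, rfl⟩
      have h2 : -a + w' ∈ Submodule.span ℝ ((-a) +ᵥ s) :=
        Submodule.subset_span ⟨w', hw', rfl⟩
      have := Submodule.sub_mem _ h1 h2
      simpa [vsub_eq_sub, sub_eq_iff_eq_add] using this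
    have hmap : (Submodule.span ℝ t).map D.subtype = D := by
      apply le_antisymm
      · rw [Submodule.map_span]
        apply Submodule.span_le.2
        rintro x ⟨v, hv, rfl⟩
        exact v.2
      · have hDeq : D = Submodule.span ℝ (s -ᵥ s) := by
          rw [hD, direction_affineSpan, vectorSpan_def]
        refine le_trans (le_of_eq hDeq) (Submodule.span_le.2 fun x hx => ?_)
        have : x ∈ Submodule.span ℝ ((-a) +ᵥ s) := hsub hx
        rwa [Submodule.map_span, show D.subtype '' t = (-a) +ᵥ s from himg]
    have := congrArg (Submodule.comap D.subtype) hmap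
    rwa [Submodule.comap_map_eq_of_injective D.injective_subtype,
      Submodule.comap_subtype_self] at this
  have haff_t : affineSpan ℝ t = ⊤ := by
    rw [AffineSubspace.affineSpan_eq_top_iff_vectorSpan_eq_top_of_nonempty ℝ _ _ ⟨0, h0t⟩,
      eq_top_iff, ← hspan_t]
    apply Submodule.span_le.2
    intro v hv
    have : v -ᵥ 0 ∈ vectorSpan ℝ t := vsub_mem_vectorSpan ℝ hv h0t
    simpa using this
  have hint : (interior t).Nonempty :=
    tconv.interior_nonempty_iff_affineSpan_eq_top.2 haff_t
  have h0ni : (0 : D) ∉ interior t := by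
    intro h0
    apply hri
    rw [mem_intrinsicInterior_iff_ball ha]
    obtain ⟨ε, hε, hball⟩ := Metric.mem_nhds_iff.1 (mem_interior_iff_mem_nhds.1 h0)
    refine ⟨ε, hε, fun y hy hdist => ?_⟩
    have hyD : y - a ∈ D := by
      rw [hD, ← vsub_eq_sub]
      exact AffineSubspace.vsub_mem_direction hy (subset_affineSpan ℝ s ha)
    have hvt : (⟨y - a, hyD⟩ : D) ∈ t := by
      apply hball
      rw [Metric.mem_ball]
      simpa [dist_eq_norm, Submodule.coe_norm] using hdist
    have := (hmem_t _).1 hvt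
    simpa using this
  obtain ⟨f, hf⟩ := geometric_hahn_banach_open_point tconv.interior isOpen_interior h0ni
  have hf0 : ∀ v ∈ interior t, f v < 0 := by simpa using hf
  have hft : ∀ v ∈ t, f v ≤ 0 := by
    intro v hv
    obtain ⟨v0, hv0⟩ := hint
    set θ : ℕ → ℝ := fun n => 1 / (n + 1) with hθ
    have hθpos : ∀ n, 0 < θ n := fun n => by positivity
    have hθle : ∀ n, θ n ≤ 1 := fun n => by
      rw [hθ]
      rw [div_le_one (by positivity)]
      linarith [Nat.cast_nonneg (α := ℝ) n]
    have hθ0 : Tendsto θ atTop (𝓝 0) := tendsto_one_div_add_atTop_nhds_zero_nat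
    set q : ℕ → D := fun n => θ n • v0 + (1 - θ n) • v with hqdef
    have hq_mem : ∀ n, q n ∈ interior t := fun n =>
      tconv.combo_interior_closure_mem_interior hv0 (subset_closure hv)
        (hθpos n) (by linarith [hθle n]) (by ring)
    have hq_tendsto : Tendsto q atTop (𝓝 v) := by
      have : Tendsto (fun n => θ n • v0 + (1 - θ n) • v) atTop
          (𝓝 ((0 : ℝ) • v0 + (1 - 0 : ℝ) • v)) := by
        exact (hθ0.smul_const v0).add ((tendsto_const_nhds.sub hθ0).smul_const v)
      simpa using this
    have : Tendsto (fun n => f (q n)) atTop (𝓝 (f v)) :=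
      (f.continuous.tendsto v).comp hq_tendsto
    exact le_of_tendsto this (Eventually.of_forall fun n => (hf0 _ (hq_mem n)).le)
  set g : D := (InnerProductSpace.toDual ℝ D).symm f with hg
  have hgv : ∀ v : D, ⟪g, v⟫ = f v := fun v => InnerProductSpace.toDual_symm_apply
  have hgne : g ≠ 0 := by
    obtain ⟨v0, hv0⟩ := hint
    intro h
    have := hgv v0
    rw [h] at this
    simp only [inner_zero_left] at this
    exact absurd (hf0 v0 hv0) (by rw [← this]; simp)
  have hgEne : (g : E) ≠ 0 := fun h => hgne (by exact_mod_cast Subtype.ext h)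
  refine ⟨‖(g : E)‖⁻¹ • (g : E), D.smul_mem _ g.2, norm_smul_inv_norm hgEne, ?_⟩
  intro w hw
  have hwD : w - a ∈ D := hdiff hw
  have hvt : (⟨w - a, hwD⟩ : D) ∈ t := (hmem_t _).2 (by simpa using hw)
  have hinner : ⟪(g : E), w - a⟫ = f ⟨w - a, hwD⟩ := by
    rw [← hgv ⟨w - a, hwD⟩]
    rfl
  rw [real_inner_smul_left, hinner]
  exact mul_nonpos_of_nonneg_of_nonpos (by positivity) (hft _ hvt)

end ConvAux

section Aux
variable {p : ℕ∞} {F : Type*} [NormedAddCommGroup F] [InnerProductSpace ℝ F]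
  {E : Type*} [NormedAddCommGroup E] [InnerProductSpace ℝ E] {M : Set E} {xbar : E}

lemma CpPatch.finrank_tangent [FiniteDimensional ℝ F] [FiniteDimensional ℝ E]
    (P : CpPatch p F M xbar) {x : E} (hx : x ∈ M) :
    Module.finrank ℝ (P.tangent x) = Module.finrank ℝ F := by
  haveI : Nonempty F := ⟨0⟩
  have hxim : ∃ t ∈ P.V, P.toFun t = x := by
    rw [P.image_eq] at hx; exact hx
  have htV : Function.invFunOn P.toFun P.V x ∈ P.V := Function.invFunOn_mem hxim
  have hinj := P.fderiv_injective _ htV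
  exact LinearMap.finrank_range_of_inj hinj

lemma CpPatch.finrank_normal [FiniteDimensional ℝ F] [FiniteDimensional ℝ E]
    (P : CpPatch p F M xbar) {x y : E} (hx : x ∈ M) (hy : y ∈ M) :
    Module.finrank ℝ (P.normal x) = Module.finrank ℝ (P.normal y) := by
  have h1 := Submodule.finrank_add_finrank_orthogonal (𝕜 := ℝ) (P.tangent x)
  have h2 := Submodule.finrank_add_finrank_orthogonal (𝕜 := ℝ) (P.tangent y)
  rw [P.finrank_tangent hx] at h1
  rw [P.finrank_tangent hy] at h2
  show Module.finrank ℝ (P.tangent x)ᗮ = Module.finrank ℝ (P.tangent y)ᗮ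
  omega

lemma lin_le_normal [FiniteDimensional ℝ E]
    (P : CpPatch p F M xbar) (A : E → Set E) (η : E → E) {x : E}
    (hproj : (fun v => (((P.tangent x).orthogonalProjectionOnto v : E))) '' A x = {η x}) :
    Lin (A x) ≤ P.normal x := by
  rw [Lin, direction_affineSpan, vectorSpan_def]
  apply Submodule.span_le.2
  rintro _ ⟨u, hu, v, hv, rfl⟩
  have h1 : (((P.tangent x).orthogonalProjectionOnto u : E)) = η x := by
    have : (((P.tangent x).orthogonalProjectionOnto u : E)) ∈
        (fun v => (((P.tangent x).orthogonalProjectionOnto v : E))) '' A x := ⟨u, hu, rfl⟩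
    rwa [hproj] at this
  have h2 : (((P.tangent x).orthogonalProjectionOnto v : E)) = η x := by
    have : (((P.tangent x).orthogonalProjectionOnto v : E)) ∈
        (fun w => (((P.tangent x).orthogonalProjectionOnto w : E))) '' A x := ⟨v, hv, rfl⟩
    rwa [hproj] at this
  have hp : (P.tangent x).orthogonalProjectionOnto (u - v) = 0 := by
    rw [map_sub]
    have := Subtype.coe_injective (h1.trans h2.symm)
    rw [this, sub_self]
  have := Submodule.orthogonalProjectionOnto_eq_zero_iff.1 hp
  simpa [vsub_eq_sub, CpPatch.normal] using this

end Aux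

lemma Lin_eq_span {E : Type*} [NormedAddCommGroup E] [InnerProductSpace ℝ E] (S : Set E) :
    Lin S = Submodule.span ℝ (S -ᵥ S) := by
  show (affineSpan ℝ S).direction = _
  rw [direction_affineSpan, vectorSpan_def]

set_option maxHeartbeats 2000000 in
/-- dual vectors converging to a relative interior point are
eventually in the relative interior. -/
theorem eventually_mem_intrinsicInterior {n d : ℕ} {p : ℕ∞} (hp : 1 ≤ p)
    (A : EuclideanSpace ℝ (Fin n) → Set (EuclideanSpace ℝ (Fin n))) (M : Set (EuclideanSpace ℝ (Fin n))) (xbar ubar : EuclideanSpace ℝ (Fin n))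
    (P : CpPatch p (EuclideanSpace ℝ (Fin d)) M xbar)
    (hA : PartlySmoothAt A M xbar P)
    (hubar : ubar ∈ intrinsicInterior ℝ (A xbar))
    (x u : ℕ → EuclideanSpace ℝ (Fin n)) (hxM : ∀ k, x k ∈ M)
    (hx : Tendsto x atTop (𝓝 xbar))
    (hu : ∀ k, u k ∈ A (x k)) (huu : Tendsto u atTop (𝓝 ubar)) :
    ∃ N : ℕ, ∀ k ≥ N, u k ∈ intrinsicInterior ℝ (A (x k)) := by
  classical
  by_contra hcon
  push_neg at hcon
  have hfreq : ∃ᶠ k in atTop, u k ∉ intrinsicInterior ℝ (A (x k)) :=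
    frequently_atTop.2 fun N => (hcon N).imp fun k hk => ⟨hk.1, hk.2⟩
  obtain ⟨husc, ⟨Wr, hWr, hreg⟩, hsharp_eq, ⟨η, Ws, hWs, hηc, hproj⟩, Wc, hWc, hlsc⟩ := hA
  have hxbarM : xbar ∈ M := by rw [P.image_eq]; exact ⟨0, P.zero_mem, P.map_zero⟩
  have hubarA : ubar ∈ A xbar := intrinsicInterior_subset hubar
  have hevr : ∀ᶠ k in atTop, x k ∈ Wr := hx hWr
  have hevs : ∀ᶠ k in atTop, x k ∈ Ws := hx hWs
  obtain ⟨φ₀, hφ₀mono, hφ₀⟩ :=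
    extraction_of_frequently_atTop (hfreq.and_eventually (hevr.and hevs))
  have hx1 : Tendsto (x ∘ φ₀) atTop (𝓝 xbar) := hx.comp hφ₀mono.tendsto_atTop
  have hu1t : Tendsto (u ∘ φ₀) atTop (𝓝 ubar) := huu.comp hφ₀mono.tendsto_atTop
  have hz : ∀ j, ∃ z : EuclideanSpace ℝ (Fin n),
      z ∈ (affineSpan ℝ (A (x (φ₀ j)))).direction ∧ ‖z‖ = 1 ∧
        ∀ w ∈ A (x (φ₀ j)), ⟪z, w - u (φ₀ j)⟫ ≤ 0 := fun j =>
    exists_unit_separating (hreg _ (hφ₀ j).2.1).2.2 (hu (φ₀ j)) (hφ₀ j).1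
  choose z1 hz1L hz1n hz1sep using hz
  have hz1s : ∀ j, z1 j ∈ Metric.sphere (0 : EuclideanSpace ℝ (Fin n)) 1 := fun j => by
    simp [mem_sphere_zero_iff_norm, hz1n j]
  obtain ⟨z, hzs, φ₁, hφ₁mono, hz2t⟩ :=
    (isCompact_sphere (0 : EuclideanSpace ℝ (Fin n)) 1).tendsto_subseq hz1s
  have hzn : ‖z‖ = 1 := by simpa [mem_sphere_zero_iff_norm] using hzs
  set ψ : ℕ → ℕ := φ₀ ∘ φ₁ with hψdef
  set x2 : ℕ → EuclideanSpace ℝ (Fin n) := x ∘ ψ with hx2def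
  set u2 : ℕ → EuclideanSpace ℝ (Fin n) := u ∘ ψ with hu2def
  set z2 : ℕ → EuclideanSpace ℝ (Fin n) := z1 ∘ φ₁ with hz2def
  have hx2 : Tendsto x2 atTop (𝓝 xbar) := hx1.comp hφ₁mono.tendsto_atTop
  have hu2t : Tendsto u2 atTop (𝓝 ubar) := hu1t.comp hφ₁mono.tendsto_atTop
  have hx2M : ∀ j, x2 j ∈ M := fun j => hxM _
  have hlsc_bar := hlsc xbar ⟨hxbarM, mem_of_mem_nhds hWc⟩
  -- Claim A : the limit functional is nonpositive on A xbar
  have hA_ineq : ∀ w ∈ A xbar, ⟪z, w - ubar⟫ ≤ 0 := by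
    intro w hw
    obtain ⟨ws, hwsA, hwst⟩ := hlsc_bar w hw x2 hx2M hx2
    have hT : Tendsto (fun j => ⟪z2 j, ws j - u2 j⟫) atTop (𝓝 ⟪z, w - ubar⟫) :=
      hz2t.inner (hwst.sub hu2t)
    exact le_of_tendsto hT (Eventually.of_forall fun j => hz1sep _ _ (hwsA j))
  -- Claim B : z belongs to Lin (A xbar)
  set L : Submodule ℝ (EuclideanSpace ℝ (Fin n)) := Lin (A xbar) with hLdef
  obtain ⟨b, hbsub, hbspan, hbli⟩ :=
    exists_linearIndependent ℝ ((A xbar) -ᵥ (A xbar) : Set (EuclideanSpace ℝ (Fin n)))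
  have hbfin : b.Finite := hbli.setFinite
  haveI : Fintype b := hbfin.fintype
  have hbspan' : Submodule.span ℝ b = L := by rw [hbspan, hLdef, Lin_eq_span]
  set N' : ℕ := Fintype.card b with hN'def
  set e : Fin N' ≃ b := (Fintype.equivFin b).symm with hedef
  set w : Fin N' → EuclideanSpace ℝ (Fin n) := fun i => ((e i : b) : EuclideanSpace ℝ (Fin n))
    with hwdef
  have hwli : LinearIndependent ℝ w := hbli.comp e e.injective
  have hrange_w : Set.range w = b := by
    rw [show w = Subtype.val ∘ e from rfl, Set.range_comp, e.surjective.range_eq,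
      Set.image_univ, Subtype.range_coe]
  have hwspan : Submodule.span ℝ (Set.range w) = L := by rw [hrange_w, hbspan']
  have hNm : N' = Module.finrank ℝ L := by
    have := finrank_span_eq_card hwli
    rw [hwspan, Fintype.card_fin] at this
    exact this.symm
  have hsel : ∀ i : Fin N', ∃ av ∈ A xbar, ∃ bv ∈ A xbar, w i = av - bv := by
    intro i
    have hm : w i ∈ (A xbar) -ᵥ (A xbar) := hbsub (e i).2
    obtain ⟨av, hav, bv, hbv, h⟩ := hm
    exact ⟨av, hav, bv, hbv, h.symm⟩
  choose av hav bv hbv hwieq using hsel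
  have hsa : ∀ i, ∃ s : ℕ → EuclideanSpace ℝ (Fin n),
      (∀ j, s j ∈ A (x2 j)) ∧ Tendsto s atTop (𝓝 (av i)) := fun i =>
    hlsc_bar (av i) (hav i) x2 hx2M hx2
  choose sa hsaA hsat using hsa
  have hsb : ∀ i, ∃ s : ℕ → EuclideanSpace ℝ (Fin n),
      (∀ j, s j ∈ A (x2 j)) ∧ Tendsto s atTop (𝓝 (bv i)) := fun i =>
    hlsc_bar (bv i) (hbv i) x2 hx2M hx2
  choose sb hsbA hsbt using hsb
  set v : Fin N' → ℕ → EuclideanSpace ℝ (Fin n) := fun i j => sa i j - sb i j with hvdef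
  have hvt : ∀ i, Tendsto (v i) atTop (𝓝 (w i)) := fun i => by
    have := (hsat i).sub (hsbt i)
    rwa [← hwieq i] at this
  have hvten : Tendsto (fun j => fun i => v i j) atTop (𝓝 w) :=
    tendsto_pi_nhds.2 fun i => hvt i
  have hevli : ∀ᶠ j in atTop, LinearIndependent ℝ (fun i => v i j) :=
    hvten (isOpen_setOf_linearIndependent.mem_nhds hwli)
  have hspanv : ∀ᶠ j in atTop, z2 j ∈ Submodule.span ℝ (Set.range fun i => v i j) := by
    filter_upwards [hevli] with j hli
    have hxin : x2 j ∈ M ∩ Ws := ⟨hx2M j, (hφ₀ (φ₁ j)).2.2⟩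
    have h1 : Submodule.span ℝ (Set.range fun i => v i j) ≤ Lin (A (x2 j)) := by
      rw [Lin_eq_span]
      apply Submodule.span_le.2
      rintro _ ⟨i, rfl⟩
      exact Submodule.subset_span ⟨sa i j, hsaA i j, sb i j, hsbA i j, rfl⟩
    have h2 : Lin (A (x2 j)) ≤ P.normal (x2 j) := lin_le_normal P A η (hproj _ hxin)
    have h3 : Module.finrank ℝ (P.normal (x2 j)) = Module.finrank ℝ L := by
      rw [P.finrank_normal (hx2M j) hxbarM]
      rw [show P.normal xbar = L from hsharp_eq]
    have h4 : Module.finrank ℝ (Submodule.span ℝ (Set.range fun i => v i j)) = N' := by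
      rw [finrank_span_eq_card hli, Fintype.card_fin]
    have h5 : Submodule.span ℝ (Set.range fun i => v i j) = P.normal (x2 j) :=
      Submodule.eq_of_le_of_finrank_le (h1.trans h2) (by rw [h3, h4, ← hNm])
    have h6 : Lin (A (x2 j)) = Submodule.span ℝ (Set.range fun i => v i j) :=
      le_antisymm (by rw [h5]; exact h2) h1
    have hzL2 : z2 j ∈ Lin (A (x2 j)) := hz1L (φ₁ j)
    rwa [h6] at hzL2
  -- the comparison linear map and its antilipschitz constant
  set Wmap : (Fin N' → ℝ) →ₗ[ℝ] EuclideanSpace ℝ (Fin n) :=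
    { toFun := fun c => ∑ i, c i • w i
      map_add' := fun c c' => by simp [add_smul, Finset.sum_add_distrib]
      map_smul' := fun r c => by simp [smul_smul, Finset.smul_sum] } with hWmapdef
  have hWinj : Function.Injective Wmap := by
    intro c c' hcc
    have h0 : Wmap (c - c') = 0 := by rw [map_sub, hcc, sub_self]
    have h0' : ∑ i, (c - c') i • w i = 0 := h0
    have := Fintype.linearIndependent_iff.1 hwli (c - c') h0'
    funext i
    have hi := this i
    simpa [sub_eq_zero] using hi
  set eC := (LinearEquiv.ofInjective Wmap hWinj).toContinuousLinearEquiv with heCdef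
  set C : ℝ := ‖(eC.symm : LinearMap.range Wmap →L[ℝ] (Fin N' → ℝ))‖ + 1 with hCdef
  have hC0 : 0 < C := by positivity
  have hCb : ∀ c : Fin N' → ℝ, ‖c‖ ≤ C * ‖Wmap c‖ := by
    intro c
    have hcoe : ((eC c : LinearMap.range Wmap) : EuclideanSpace ℝ (Fin n)) = Wmap c := by
      show ((LinearEquiv.ofInjective Wmap hWinj c : LinearMap.range Wmap) :
        EuclideanSpace ℝ (Fin n)) = Wmap c
      simp [LinearEquiv.ofInjective_apply]
    have hnorm_eq : ‖eC c‖ = ‖Wmap c‖ := by rw [← hcoe]; rfl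
    calc ‖c‖ = ‖eC.symm (eC c)‖ := by rw [eC.symm_apply_apply]
      _ ≤ ‖(eC.symm : LinearMap.range Wmap →L[ℝ] (Fin N' → ℝ))‖ * ‖eC c‖ :=
        (eC.symm : LinearMap.range Wmap →L[ℝ] (Fin N' → ℝ)).le_opNorm (eC c)
      _ ≤ C * ‖Wmap c‖ := by
        rw [hnorm_eq]
        have h1 : ‖(eC.symm : LinearMap.range Wmap →L[ℝ] (Fin N' → ℝ))‖ ≤ C :=
          le_add_of_nonneg_right zero_le_one
        exact mul_le_mul_of_nonneg_right h1 (norm_nonneg _)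
  set εs : ℕ → ℝ := fun j => ∑ i, ‖v i j - w i‖ with hεsdef
  have hεnn : ∀ j, 0 ≤ εs j := fun j => Finset.sum_nonneg fun i _ => norm_nonneg _
  have hεt : Tendsto εs atTop (𝓝 0) := by
    have h : ∀ i : Fin N', Tendsto (fun j => ‖v i j - w i‖) atTop (𝓝 0) := by
      intro i
      have := ((hvt i).sub (tendsto_const_nhds : Tendsto (fun _ : ℕ => w i) atTop _)).norm
      simpa using this
    have := tendsto_finset_sum (Finset.univ : Finset (Fin N'))
      (fun i _ => h i)
    simpa using this
  have hbound : ∀ᶠ j in atTop, Metric.infDist (z2 j) (L : Set (EuclideanSpace ℝ (Fin n)))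
      ≤ (2 * C) * εs j := by
    have hsmall : ∀ᶠ j in atTop, εs j < 1 / (2 * C) :=
      hεt.eventually_lt_const (by positivity)
    filter_upwards [hspanv, hsmall] with j hzspan hjsmall
    obtain ⟨c, hc⟩ := (Submodule.mem_span_range_iff_exists_fun ℝ).1 hzspan
    set y : EuclideanSpace ℝ (Fin n) := ∑ i, c i • w i with hydef
    have hyL : y ∈ L := by
      rw [← hwspan]
      exact (Submodule.mem_span_range_iff_exists_fun ℝ).2 ⟨c, rfl⟩
    have hdiff : ‖z2 j - y‖ ≤ ‖c‖ * εs j := by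
      have hrw : z2 j - y = ∑ i, c i • (v i j - w i) := by
        rw [← hc, hydef, ← Finset.sum_sub_distrib]
        exact Finset.sum_congr rfl fun i _ => (smul_sub _ _ _).symm
      rw [hrw]
      calc ‖∑ i, c i • (v i j - w i)‖ ≤ ∑ i, ‖c i • (v i j - w i)‖ := norm_sum_le _ _
        _ ≤ ∑ i, ‖c‖ * ‖v i j - w i‖ := Finset.sum_le_sum fun i _ => by
            rw [norm_smul]
            exact mul_le_mul_of_nonneg_right (norm_le_pi_norm c i) (norm_nonneg _)
        _ = ‖c‖ * εs j := by rw [Finset.mul_sum]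
    have hz2n : ‖z2 j‖ = 1 := hz1n (φ₁ j)
    have hcnorm : ‖c‖ ≤ 2 * C := by
      have h1 : Wmap c = y := rfl
      have h2 : ‖y‖ ≤ 1 + ‖c‖ * εs j := by
        have h2a : ‖y‖ ≤ ‖z2 j‖ + ‖z2 j - y‖ := by
          calc ‖y‖ = ‖z2 j - (z2 j - y)‖ := by rw [sub_sub_cancel]
            _ ≤ ‖z2 j‖ + ‖z2 j - y‖ := norm_sub_le _ _
        rw [hz2n] at h2a
        linarith [hdiff]
      have h3 : ‖c‖ ≤ C * (1 + ‖c‖ * εs j) := by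
        have := hCb c
        rw [h1] at this
        exact this.trans (mul_le_mul_of_nonneg_left h2 hC0.le)
      have h4 : C * εs j ≤ 1 / 2 := by
        have h5 : εs j * (2 * C) < 1 := (lt_div_iff₀ (by positivity)).1 hjsmall
        nlinarith [hC0, hεnn j]
      nlinarith [h3, mul_le_mul_of_nonneg_left h4 (norm_nonneg c), hC0, norm_nonneg c]
    have hfinal : ‖z2 j - y‖ ≤ 2 * C * εs j :=
      hdiff.trans (mul_le_mul_of_nonneg_right hcnorm (hεnn j))
    calc Metric.infDist (z2 j) (L : Set (EuclideanSpace ℝ (Fin n)))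
        ≤ dist (z2 j) y := Metric.infDist_le_dist_of_mem hyL
      _ = ‖z2 j - y‖ := by rw [dist_eq_norm]
      _ ≤ 2 * C * εs j := hfinal
  have hinf0 : Tendsto (fun j => Metric.infDist (z2 j) (L : Set (EuclideanSpace ℝ (Fin n))))
      atTop (𝓝 0) := by
    apply squeeze_zero' (Eventually.of_forall fun j => Metric.infDist_nonneg) hbound
    have := hεt.const_mul (2 * C)
    simpa using this
  have hinfz : Metric.infDist z (L : Set (EuclideanSpace ℝ (Fin n))) = 0 :=
    tendsto_nhds_unique
      (((Metric.continuous_infDist_pt (L : Set (EuclideanSpace ℝ (Fin n)))).tendsto z).comp hz2t)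
      hinf0
  have hzL : z ∈ L := by
    have hmem : z ∈ closure (L : Set (EuclideanSpace ℝ (Fin n))) :=
      (Metric.mem_closure_iff_infDist_zero ⟨0, Submodule.zero_mem L⟩).2 hinfz
    rwa [L.closed_of_finiteDimensional.closure_eq] at hmem
  -- final contradiction
  obtain ⟨ε₀, hε₀, hball⟩ := (mem_intrinsicInterior_iff_ball hubarA).1 hubar
  set w0 : EuclideanSpace ℝ (Fin n) := (ε₀ / 2) • z + ubar with hw0def
  have hw0span : w0 ∈ affineSpan ℝ (A xbar) := by
    apply AffineSubspace.vadd_mem_of_mem_direction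
    · exact Submodule.smul_mem _ _ hzL
    · exact subset_affineSpan ℝ _ hubarA
  have hdist : dist w0 ubar < ε₀ := by
    rw [hw0def, dist_eq_norm]
    simp only [add_sub_cancel_right]
    rw [norm_smul, hzn]
    simp only [Real.norm_eq_abs, abs_of_pos (by linarith : (0:ℝ) < ε₀ / 2), mul_one]
    linarith
  have hw0A : w0 ∈ A xbar := hball w0 hw0span hdist
  have hineq := hA_ineq w0 hw0A
  have hsub : w0 - ubar = (ε₀ / 2) • z := by rw [hw0def]; abel
  rw [hsub, real_inner_smul_right, real_inner_self_eq_norm_sq, hzn] at hineq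
  nlinarith

end
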